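/- Let R be a commutative ring and M a commutative monoid. The ring R[M] is noetherian if and only if R is noetherian and M is finitely generated. -/

import Mathlib

open AddMonoidAlgebra Finsupp

namespace MonAlgNoeth

variable {S : Type*} [AddCommMonoid S]

/-- Divisibility in an additive commutative monoid. -/
def Dvd' (a b : S) : Prop := ∃ c, b = a + c

theorem Dvd'.refl (a : S) : Dvd' a a := ⟨0, (add_zero a).symm⟩

theorem Dvd'.trans {a b c : S} (h1 : Dvd' a b) (h2 : Dvd' b c) : Dvd' a c := by
  obtain ⟨d, rfl⟩ := h1; obtain ⟨e, rfl⟩ := h2; exact ⟨d + e, add_assoc _ _ _⟩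

theorem of'_inj (R : Type*) [CommRing R] [Nontrivial R] {a b : S}
    (h : of' R S a = of' R S b) : a = b := by
  simpa using AddMonoidAlgebra.single_left_injective (one_ne_zero (α := R)) h

/-- Divisibility is a wqo: every sequence has a "good pair". -/
theorem exists_dvd_pair (R : Type*) [CommRing R] [Nontrivial R]
    [IsNoetherianRing (AddMonoidAlgebra R S)] (a : ℕ → S) :
    ∃ i j, i < j ∧ Dvd' (a i) (a j) := by
  have mono : Monotone fun n => Ideal.span (of' R S '' (a '' Set.Iio n)) := by
    intro m n hmn
    exact Ideal.span_mono (Set.image_mono (Set.image_mono fun x hx => lt_of_lt_of_le hx hmn))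
  obtain ⟨n, hn⟩ := monotone_stabilizes_iff_noetherian.mpr inferInstance
    ⟨fun n => Ideal.span (of' R S '' (a '' Set.Iio n)), mono⟩
  have h1 : of' R S (a n) ∈ Ideal.span (of' R S '' (a '' Set.Iio (n+1))) :=
    Ideal.subset_span ⟨a n, ⟨n, Nat.lt_succ_self n, rfl⟩, rfl⟩
  have hstab : Ideal.span (of' R S '' (a '' Set.Iio (n+1)))
      = Ideal.span (of' R S '' (a '' Set.Iio n)) := (hn (n+1) (Nat.le_succ n)).symm
  rw [hstab] at h1
  rw [AddMonoidAlgebra.mem_ideal_span_of'_image] at h1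
  have hsupp : a n ∈ (of' R S (a n)).coeff.support := by
    rw [of'_apply, AddMonoidAlgebra.coeff_single, Finsupp.support_single_ne_zero _ (one_ne_zero (α := R))]
    exact Finset.mem_singleton_self _
  obtain ⟨m', ⟨i, hi, rfl⟩, d, hd⟩ := h1 (a n) hsupp
  exact ⟨i, n, hi, d, by rw [hd, add_comm]⟩

/-- Strict divisibility has minimal elements in every nonempty set. -/
theorem exists_dvd_min (R : Type*) [CommRing R] [Nontrivial R]
    [IsNoetherianRing (AddMonoidAlgebra R S)] (A : Set S) (hA : A.Nonempty) :
    ∃ a ∈ A, ∀ y ∈ A, ¬ (Dvd' y a ∧ ¬ Dvd' a y) := by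
  by_contra hcon
  push_neg at hcon
  have step : ∀ p : {x // x ∈ A}, ∃ q : {x // x ∈ A}, Dvd' q.1 p.1 ∧ ¬ Dvd' p.1 q.1 := by
    rintro ⟨x, hx⟩
    obtain ⟨y, hy, h1, h2⟩ := hcon x hx
    exact ⟨⟨y, hy⟩, h1, h2⟩
  choose g hg1 hg2 using step
  let f : ℕ → {x // x ∈ A} := fun n => g^[n] ⟨hA.choose, hA.choose_spec⟩
  have hfsucc : ∀ n, f (n+1) = g (f n) := fun n => Function.iterate_succ_apply' g n _
  have hchain : ∀ i j, i ≤ j → Dvd' (f j).1 (f i).1 := by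
    intro i j hij
    induction j, hij using Nat.le_induction with
    | base => exact Dvd'.refl _
    | succ n hn ih => rw [hfsucc n]; exact (hg1 (f n)).trans ih
  obtain ⟨i, j, hij, hdvd⟩ := exists_dvd_pair R (fun n => (f n).1)
  have : Dvd' (f i).1 (f (i+1)).1 := hdvd.trans (hchain (i+1) j hij)
  rw [hfsucc i] at this
  exact hg2 (f i) this

/-- wqo: finite basis property for arbitrary sets. -/
theorem exists_finite_basis (R : Type*) [CommRing R] [Nontrivial R]
    [IsNoetherianRing (AddMonoidAlgebra R S)] (P : Set S) :
    ∃ B : Finset S, ↑B ⊆ P ∧ ∀ x ∈ P, ∃ b ∈ B, Dvd' b x := by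
  classical
  by_contra hcon
  push_neg at hcon
  have step : ∀ p : {B : Finset S // ↑B ⊆ P}, ∃ x, x ∈ P ∧ ∀ b ∈ p.1, ¬ Dvd' b x := by
    rintro ⟨B, hB⟩
    obtain ⟨x, hx, hx2⟩ := hcon B hB
    exact ⟨x, hx, hx2⟩
  choose pick hpick1 hpick2 using step
  let next : {B : Finset S // ↑B ⊆ P} → {B : Finset S // ↑B ⊆ P} := fun p =>
    ⟨insert (pick p) p.1, by
      rw [Finset.coe_insert]
      exact Set.insert_subset (hpick1 p) p.2⟩
  let u : ℕ → {B : Finset S // ↑B ⊆ P} := fun n => next^[n] ⟨∅, by simp⟩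
  have husucc : ∀ n, u (n+1) = next (u n) := fun n => Function.iterate_succ_apply' next n _
  let v : ℕ → S := fun n => pick (u n)
  have hv_mem : ∀ i j, i < j → v i ∈ (u j).1 := by
    intro i j hij
    induction j, hij using Nat.le_induction with
    | base =>
      rw [husucc i]
      exact Finset.mem_insert_self _ _
    | succ n hn ih =>
      rw [husucc n]
      exact Finset.mem_insert_of_mem ih
  obtain ⟨i, j, hij, hdvd⟩ := exists_dvd_pair R v
  exact hpick2 (u j) (v i) (hv_mem i j hij) hdvd

/-- mapDomainRingHom on a single. -/
theorem mapDomainRingHom_single (R : Type*) [CommRing R] {T : Type*} [AddCommMonoid T]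
    (f : S →+ T) (a : S) (b : R) :
    AddMonoidAlgebra.mapDomainRingHom R f (AddMonoidAlgebra.single a b)
      = AddMonoidAlgebra.single (f a) b := by
  show AddMonoidAlgebra.mapDomain f _ = _
  rw [AddMonoidAlgebra.mapDomain_single]

/-- Surjectivity of mapDomain ring hom on monoid algebras. -/
theorem mapDomainRingHom_surjective (R : Type*) [CommRing R] {T : Type*} [AddCommMonoid T]
    (f : S →+ T) (hf : Function.Surjective f) :
    Function.Surjective (AddMonoidAlgebra.mapDomainRingHom R f) := by
  intro g
  induction g using AddMonoidAlgebra.induction with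
  | zero => exact ⟨0, map_zero _⟩
  | single_add a b g _ _ ih =>
    obtain ⟨p, hp⟩ := ih
    obtain ⟨a', rfl⟩ := hf a
    refine ⟨AddMonoidAlgebra.single a' b + p, ?_⟩
    rw [map_add, hp, mapDomainRingHom_single]

/-- The ideal attached to a congruence. -/
noncomputable def conIdeal (R : Type*) [CommRing R] (c : AddCon S) : Ideal (AddMonoidAlgebra R S) :=
  Ideal.span {f | ∃ a b, c a b ∧ f = of' R S a - of' R S b}

theorem conIdeal_mono (R : Type*) [CommRing R] {c d : AddCon S} (h : c ≤ d) :
    conIdeal R c ≤ conIdeal R d := by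
  apply Ideal.span_mono
  rintro f ⟨a, b, hab, rfl⟩
  exact ⟨a, b, h hab, rfl⟩

theorem mem_conIdeal_iff (R : Type*) [CommRing R] [Nontrivial R] (c : AddCon S) (a b : S) :
    of' R S a - of' R S b ∈ conIdeal R c ↔ c a b := by
  constructor
  · intro h
    have hker : conIdeal R c ≤ RingHom.ker (AddMonoidAlgebra.mapDomainRingHom R c.mk') := by
      rw [conIdeal, Ideal.span_le]
      rintro f ⟨x, y, hxy, rfl⟩
      rw [SetLike.mem_coe, RingHom.mem_ker, map_sub]
      have hmk : c.mk' x = c.mk' y := c.eq.mpr hxy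
      rw [of'_apply, of'_apply, mapDomainRingHom_single, mapDomainRingHom_single, hmk, sub_self]
    have h2 := hker h
    rw [RingHom.mem_ker, map_sub, sub_eq_zero, of'_apply, of'_apply,
      mapDomainRingHom_single, mapDomainRingHom_single] at h2
    have := AddMonoidAlgebra.single_left_injective (one_ne_zero (α := R)) h2
    exact c.eq.mp this
  · intro h
    exact Ideal.subset_span ⟨a, b, h, rfl⟩

theorem conIdeal_strictMono (R : Type*) [CommRing R] [Nontrivial R] {c d : AddCon S}
    (h : c < d) : conIdeal R c < conIdeal R d := by
  refine lt_of_le_of_ne (conIdeal_mono R h.le) fun heq => ?_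
  obtain ⟨x, y, hxy, hnxy⟩ : ∃ x y, d x y ∧ ¬ c x y := by
    by_contra hc
    push_neg at hc
    exact absurd (le_antisymm h.le hc) h.ne
  have : of' R S x - of' R S y ∈ conIdeal R d := (mem_conIdeal_iff R d x y).mpr hxy
  rw [← heq, mem_conIdeal_iff] at this
  exact hnxy this

theorem addCon_wf (R : Type*) [CommRing R] [Nontrivial R]
    [IsNoetherianRing (AddMonoidAlgebra R S)] :
    WellFounded ((· > ·) : AddCon S → AddCon S → Prop) := by
  have wfI : WellFounded ((· > ·) : Ideal (AddMonoidAlgebra R S) → _ → Prop) :=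
    isNoetherian_iff.mp inferInstance
  exact Subrelation.wf (fun {c d} h => conIdeal_strictMono R h) (InvImage.wf (conIdeal R) wfI)

/-- From a f.g. quotient, get a finite set of representatives generating modulo the congruence. -/
theorem quot_fg_lift (c : AddCon S) (h : AddMonoid.FG c.Quotient) :
    ∃ L : Finset S, ∀ x : S, ∃ w ∈ AddSubmonoid.closure (L : Set S), c x w := by
  classical
  obtain ⟨T, hT⟩ := AddMonoid.fg_def.mp h
  let ℓ : c.Quotient → S := fun q => (AddCon.mk'_surjective (c := c) q).choose
  have hℓ : ∀ q, c.mk' (ℓ q) = q := fun q => (AddCon.mk'_surjective (c := c) q).choose_spec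
  refine ⟨T.image ℓ, fun x => ?_⟩
  have hx : c.mk' x ∈ AddSubmonoid.closure (T : Set c.Quotient) := by
    rw [hT]; trivial
  have hsub : AddSubmonoid.closure (T : Set c.Quotient) ≤
      AddSubmonoid.map c.mk' (AddSubmonoid.closure ((T.image ℓ : Finset S) : Set S)) := by
    rw [AddSubmonoid.closure_le]
    intro t ht
    refine ⟨ℓ t, AddSubmonoid.subset_closure ?_, hℓ t⟩
    rw [Finset.coe_image]
    exact Set.mem_image_of_mem _ ht
  obtain ⟨w, hw, hwx⟩ := hsub hx
  refine ⟨w, hw, c.symm (c.eq.mp ?_)⟩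
  rw [show ((w : c.Quotient)) = c.mk' w from rfl, hwx]
  rfl

/-- The congruence attached to a subgroup of the units. -/
def unitCon (H : AddSubgroup (AddUnits S)) : AddCon S :=
  { r := fun x y => ∃ h ∈ H, x = y + ((h : AddUnits S) : S)
    iseqv := by
      constructor
      · exact fun x => ⟨0, H.zero_mem, by simp⟩
      · rintro x y ⟨h, hh, rfl⟩
        exact ⟨-h, H.neg_mem hh, by simp [add_assoc, ← AddUnits.val_add]⟩
      · rintro x y z ⟨h₁, hh₁, rfl⟩ ⟨h₂, hh₂, rfl⟩
        exact ⟨h₂ + h₁, H.add_mem hh₂ hh₁, by simp [add_assoc, ← AddUnits.val_add]⟩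
    add' := by
      rintro w x y z ⟨h₁, hh₁, rfl⟩ ⟨h₂, hh₂, rfl⟩
      refine ⟨h₁ + h₂, H.add_mem hh₁ hh₂, ?_⟩
      rw [AddUnits.val_add]
      abel }

theorem unitCon_strictMono {H H' : AddSubgroup (AddUnits S)} (h : H < H') :
    unitCon H < unitCon H' := by
  refine lt_of_le_of_ne (fun x y hxy => ?_) fun heq => ?_
  · obtain ⟨u, hu, rfl⟩ := hxy
    exact ⟨u, h.le hu, rfl⟩
  · obtain ⟨u, hu, hnu⟩ := SetLike.exists_of_lt h
    have : unitCon H' ((u : S)) 0 := ⟨u, hu, by simp⟩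
    rw [← heq] at this
    obtain ⟨w, hw, hwu⟩ := this
    rw [zero_add] at hwu
    exact hnu (by rwa [show u = w from AddUnits.ext hwu])

/-- The units of S are generated by a finite set, given Noetherianity of the monoid algebra. -/
theorem units_fg (R : Type*) [CommRing R] [Nontrivial R]
    [IsNoetherianRing (AddMonoidAlgebra R S)] :
    ∃ Ω : Finset S, ∀ x : S, IsAddUnit x → x ∈ AddSubmonoid.closure (Ω : Set S) := by
  classical
  have wfSub : WellFounded ((· > ·) : AddSubgroup (AddUnits S) → _ → Prop) :=
    Subrelation.wf (fun {H H'} h => unitCon_strictMono h) (InvImage.wf unitCon (addCon_wf R))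
  have wfMod : WellFounded ((· > ·) : Submodule ℤ (AddUnits S) → _ → Prop) := by
    refine Subrelation.wf (r := InvImage (· > ·) (AddSubgroup.toIntSubmodule).symm)
      (fun {p q} h => ?_) (InvImage.wf _ wfSub)
    exact (AddSubgroup.toIntSubmodule (M := AddUnits S)).symm.strictMono h
  haveI : IsNoetherian ℤ (AddUnits S) := isNoetherian_iff.mpr wfMod
  haveI : Module.Finite ℤ (AddUnits S) := Module.finite_def.mpr (IsNoetherian.noetherian ⊤)
  haveI : AddGroup.FG (AddUnits S) := Module.Finite.iff_addGroup_fg.mp ‹_›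
  haveI : AddMonoid.FG (AddUnits S) := AddGroup.fg_iff_addMonoid_fg.mp ‹_›
  obtain ⟨T, hT⟩ := AddMonoid.fg_def.mp ‹AddMonoid.FG (AddUnits S)›
  refine ⟨T.image (AddUnits.coeHom S), fun x hx => ?_⟩
  have h1 : hx.addUnit ∈ AddSubmonoid.closure (T : Set (AddUnits S)) := by rw [hT]; trivial
  have h2 := AddSubmonoid.mem_map_of_mem (AddUnits.coeHom S) h1
  rw [AddMonoidHom.map_mclosure] at h2
  rw [Finset.coe_image]
  simpa [IsAddUnit.addUnit_spec] using h2

/-- Rees congruence of an ideal. -/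
def reesCon (D : Set S) (hD : ∀ x ∈ D, ∀ s, x + s ∈ D) : AddCon S :=
  { r := fun x y => x = y ∨ (x ∈ D ∧ y ∈ D)
    iseqv := by
      refine ⟨fun x => Or.inl rfl, ?_, ?_⟩
      · rintro x y (rfl | ⟨h1, h2⟩)
        · exact Or.inl rfl
        · exact Or.inr ⟨h2, h1⟩
      · rintro x y z (rfl | ⟨h1, h2⟩) (rfl | ⟨h3, h4⟩)
        · exact Or.inl rfl
        · exact Or.inr ⟨h3, h4⟩
        · exact Or.inr ⟨h1, h2⟩
        · exact Or.inr ⟨h1, h4⟩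
    add' := by
      rintro w x y z (rfl | ⟨h1, h2⟩) (rfl | ⟨h3, h4⟩)
      · exact Or.inl rfl
      · exact Or.inr ⟨by rw [add_comm]; exact hD y h3 w, by rw [add_comm]; exact hD z h4 w⟩
      · exact Or.inr ⟨hD w h1 y, hD x h2 y⟩
      · exact Or.inr ⟨hD w h1 y, hD x h2 z⟩ }

theorem reesCon_rel (D : Set S) (hD : ∀ x ∈ D, ∀ s, x + s ∈ D) (x y : S) :
    reesCon D hD x y ↔ (x = y ∨ (x ∈ D ∧ y ∈ D)) := Iff.rfl

/-- The kernel congruence of translation by `a`. -/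
def transCon (a : S) : AddCon S :=
  { r := fun x y => x + a = y + a
    iseqv := ⟨fun x => rfl, fun h => h.symm, fun h1 h2 => h1.trans h2⟩
    add' := by
      intro w x y z h1 h2
      calc w + y + a = (w + a) + y := by abel
        _ = (x + a) + y := by rw [h1]
        _ = (y + a) + x := by abel
        _ = (z + a) + x := by rw [h2]
        _ = x + z + a := by abel }

theorem transCon_rel (a x y : S) : transCon a x y ↔ x + a = y + a := Iff.rfl

theorem exists_not_mem_closure (hfg : ¬ AddMonoid.FG S) (F : Finset S) :
    ∃ x, x ∉ AddSubmonoid.closure (F : Set S) := by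
  by_contra h
  push_neg at h
  exact hfg (AddMonoid.fg_def.mpr ⟨F, (AddSubmonoid.eq_top_iff' _).mpr h⟩)

/-- THE CORE LEMMA: if all proper quotients of `S` are f.g. and the monoid algebra is
Noetherian, then `S` is f.g. -/
theorem fg_of_quot (R : Type*) [CommRing R] [Nontrivial R]
    [IsNoetherianRing (AddMonoidAlgebra R S)]
    (hq : ∀ c : AddCon S, c ≠ ⊥ → AddMonoid.FG c.Quotient) : AddMonoid.FG S := by
  classical
  by_contra hfg
  have hne : ∀ (c : AddCon S) (u v : S), c u v → u ≠ v → c ≠ ⊥ := by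
    intro c u v hc huv hbot
    rw [hbot] at hc
    exact huv hc
  set V : Set S := {x | ∃ F : Finset S, ∀ y, Dvd' x y → y ∈ AddSubmonoid.closure (F : Set S)}
    with hVdef
  have hVup : ∀ x ∈ V, ∀ d, x + d ∈ V := by
    rintro x ⟨F, hF⟩ d
    exact ⟨F, fun y hy => hF y (Dvd'.trans ⟨d, rfl⟩ hy)⟩
  by_cases hVtwo : ∃ u ∈ V, ∃ v ∈ V, u ≠ v
  · -- V has two elements: S = ⟨G⟩ ∪ V and V is covered by finitely many f.g. sets
    obtain ⟨u, hu, v, hv, huv⟩ := hVtwo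
    have hcne : reesCon V hVup ≠ ⊥ := hne _ u v (Or.inr ⟨hu, hv⟩) huv
    obtain ⟨G, hG⟩ := quot_fg_lift _ (hq _ hcne)
    obtain ⟨B, hB1, hB2⟩ := exists_finite_basis R V
    have hBV : ∀ b : {b // b ∈ B}, ∃ F : Finset S,
        ∀ y, Dvd' b.1 y → y ∈ AddSubmonoid.closure (F : Set S) := fun b => hB1 b.2
    choose Fb hFb using hBV
    set Gens : Finset S := G ∪ B.attach.biUnion Fb with hGens
    refine hfg (AddMonoid.fg_def.mpr ⟨Gens, (AddSubmonoid.eq_top_iff' _).mpr fun x => ?_⟩)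
    have hsubG : AddSubmonoid.closure (G : Set S) ≤ AddSubmonoid.closure (Gens : Set S) := by
      apply AddSubmonoid.closure_mono
      intro g hg
      simp only [hGens, Finset.coe_union, Set.mem_union]
      exact Or.inl hg
    have hsubF : ∀ b : {b // b ∈ B},
        AddSubmonoid.closure ((Fb b : Finset S) : Set S)
          ≤ AddSubmonoid.closure (Gens : Set S) := by
      intro b
      apply AddSubmonoid.closure_mono
      intro g hg
      simp only [hGens, Finset.coe_union, Set.mem_union, Finset.coe_biUnion, Set.mem_iUnion]
      exact Or.inr ⟨b, Finset.mem_attach _ _, hg⟩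
    have hVin : ∀ y ∈ V, y ∈ AddSubmonoid.closure (Gens : Set S) := by
      intro y hy
      obtain ⟨b, hb, hdvd⟩ := hB2 y hy
      exact hsubF ⟨b, hb⟩ (hFb ⟨b, hb⟩ y hdvd)
    obtain ⟨w, hw, hc⟩ := hG x
    rcases hc with rfl | ⟨hxV, -⟩
    · exact hsubG hw
    · exact hVin x hxV
  · -- V has at most one element
    push_neg at hVtwo
    obtain ⟨Ω, hΩ⟩ := units_fg R (S := S)
    obtain ⟨F₀, hF₀u, hF₀V⟩ : ∃ F₀ : Finset S,
        (∀ x : S, IsAddUnit x → x ∈ AddSubmonoid.closure (F₀ : Set S)) ∧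
        (∀ v ∈ V, v ∈ AddSubmonoid.closure (F₀ : Set S)) := by
      by_cases hVe : V.Nonempty
      · obtain ⟨z, hz⟩ := hVe
        refine ⟨insert z Ω, fun x hx => ?_, fun v hv => ?_⟩
        · exact AddSubmonoid.closure_mono (by simp [Finset.coe_insert, Set.subset_insert]) (hΩ x hx)
        · rw [hVtwo v hv z hz]
          exact AddSubmonoid.subset_closure (by simp)
      · refine ⟨Ω, hΩ, fun v hv => absurd ⟨v, hv⟩ hVe⟩
    obtain ⟨a₀, ha₀, -⟩ := exists_dvd_min R {x : S | x ∉ AddSubmonoid.closure (F₀ : Set S)}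
      (exists_not_mem_closure hfg F₀)
    simp only [Set.mem_setOf_eq] at ha₀
    -- The ideal D₀ = ↑a₀ ∪ V
    set D₀ : Set S := {y | Dvd' a₀ y} ∪ V with hD₀def
    have hD₀up : ∀ x ∈ D₀, ∀ s, x + s ∈ D₀ := by
      rintro x (hx | hx) s
      · exact Or.inl (Dvd'.trans hx ⟨s, rfl⟩)
      · exact Or.inr (hVup x hx s)
    have hy₀ : ∃ y ∈ D₀, y ≠ a₀ := by
      by_contra h
      push_neg at h
      have haV : a₀ ∈ V := by
        refine ⟨{a₀}, fun y hy => ?_⟩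
        rw [h y (Or.inl hy)]
        exact AddSubmonoid.subset_closure (by simp)
      exact ha₀ (hF₀V a₀ haV)
    obtain ⟨y₀, hy₀D, hy₀ne⟩ := hy₀
    have hc₀ne : reesCon D₀ hD₀up ≠ ⊥ :=
      hne _ a₀ y₀ (Or.inr ⟨Or.inl (Dvd'.refl a₀), hy₀D⟩) (Ne.symm hy₀ne)
    obtain ⟨G₀, hG₀⟩ := quot_fg_lift _ (hq _ hc₀ne)
    set F₁ : Finset S := (F₀ ∪ G₀) ∪ {a₀} with hF₁def
    have hF₀sub : AddSubmonoid.closure (F₀ : Set S) ≤ AddSubmonoid.closure (F₁ : Set S) :=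
      AddSubmonoid.closure_mono (by intro g hg; simp only [hF₁def]; simp [hg])
    have hG₀sub : AddSubmonoid.closure (G₀ : Set S) ≤ AddSubmonoid.closure (F₁ : Set S) :=
      AddSubmonoid.closure_mono (by intro g hg; simp only [hF₁def]; simp [hg])
    have ha₀F₁ : a₀ ∈ AddSubmonoid.closure (F₁ : Set S) :=
      AddSubmonoid.subset_closure (by simp [hF₁def])
    obtain ⟨a₁, ha₁, ha₁min⟩ := exists_dvd_min R {x : S | x ∉ AddSubmonoid.closure (F₁ : Set S)}
      (exists_not_mem_closure hfg F₁)
    simp only [Set.mem_setOf_eq] at ha₁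
    -- a₁ = a₀ + t
    obtain ⟨t, ht⟩ : Dvd' a₀ a₁ := by
      obtain ⟨w, hw, hc⟩ := hG₀ a₁
      rcases hc with rfl | ⟨hmem, -⟩
      · exact absurd (hG₀sub hw) ha₁
      · rcases hmem with h | h
        · exact h
        · exact absurd (hF₀sub (hF₀V a₁ h)) ha₁
    have htne : t ∉ AddSubmonoid.closure (F₁ : Set S) := by
      intro hmem
      exact ha₁ (ht ▸ AddSubmonoid.add_mem _ ha₀F₁ hmem)
    have h1 : Dvd' t a₁ := ⟨a₀, by rw [ht, add_comm]⟩
    have h2 : Dvd' a₁ t := by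
      by_contra hno
      exact ha₁min t htne ⟨h1, hno⟩
    obtain ⟨d, hd⟩ := h2
    have key : a₁ + (a₀ + d) = a₁ := by
      calc a₁ + (a₀ + d) = a₀ + (a₁ + d) := by abel
        _ = a₀ + t := by rw [← hd]
        _ = a₁ := ht.symm
    by_cases hlam : transCon a₁ = (⊥ : AddCon S)
    · -- a₀ is a unit: contradiction
      have hrel : transCon a₁ (a₀ + d) 0 := by
        rw [transCon_rel, zero_add, add_comm]
        exact key
      rw [hlam] at hrel
      have hzero : a₀ + d = 0 := hrel
      have hunit : IsAddUnit a₀ := ⟨AddUnits.mkOfAddEqZero a₀ d hzero, rfl⟩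
      exact ha₀ (hF₀u a₀ hunit)
    · -- a₁ ∈ V : contradiction
      obtain ⟨L, hL⟩ := quot_fg_lift _ (hq _ hlam)
      have ha₁V : a₁ ∈ V := by
        refine ⟨insert a₁ L, fun y hy => ?_⟩
        obtain ⟨e, he⟩ := hy
        obtain ⟨w, hw, hce⟩ := hL e
        rw [transCon_rel] at hce
        have hy' : y = w + a₁ := by rw [he, add_comm a₁ e, hce]
        rw [hy']
        refine AddSubmonoid.add_mem _ ?_ (AddSubmonoid.subset_closure (by simp))
        exact AddSubmonoid.closure_mono (by simp [Finset.coe_insert, Set.subset_insert]) hw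
      exact ha₁ (hF₀sub (hF₀V a₁ ha₁V))

/-- Noetherianity of the monoid algebra of a quotient monoid. -/
theorem noeth_quot (R : Type*) [CommRing R] [IsNoetherianRing (AddMonoidAlgebra R S)]
    (c : AddCon S) : IsNoetherianRing (AddMonoidAlgebra R c.Quotient) :=
  isNoetherianRing_of_surjective (AddMonoidAlgebra R S) (AddMonoidAlgebra R c.Quotient)
    (AddMonoidAlgebra.mapDomainRingHom R c.mk')
    (mapDomainRingHom_surjective R c.mk' AddCon.mk'_surjective)

/-- The main hard direction. -/
theorem main_fg (R : Type*) [CommRing R] [Nontrivial R] (S' : Type*) [AddCommMonoid S']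
    [IsNoetherianRing (AddMonoidAlgebra R S')] : AddMonoid.FG S' := by
  have key : ∀ c : AddCon S', AddMonoid.FG c.Quotient := by
    intro c
    induction c using WellFounded.induction (addCon_wf (S := S') R) with
    | _ x IH =>
      haveI := noeth_quot R x
      refine fg_of_quot R fun d hd => ?_
      -- lift d to a congruence on S'
      set c' : AddCon S' :=
        { r := fun p q => d (x.mk' p) (x.mk' q)
          iseqv := ⟨fun p => d.refl _, fun h => d.symm h, fun h1 h2 => d.trans h1 h2⟩
          add' := by
            intro a b u v h1 h2
            show d (x.mk' (a + u)) (x.mk' (b + v))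
            have e1 : x.mk' (a + u) = x.mk' a + x.mk' u := map_add _ _ _
            have e2 : x.mk' (b + v) = x.mk' b + x.mk' v := map_add _ _ _
            rw [e1, e2]
            exact d.add h1 h2 } with hc'def
      have hlt : x < c' := by
        refine lt_of_le_of_ne (fun p q hpq => ?_) fun heq => ?_
        · show d (x.mk' p) (x.mk' q)
          have hm : x.mk' p = x.mk' q := x.eq.mpr hpq
          rw [hm]
          exact d.refl _
        · have hdpair : ∃ q1 q2, d q1 q2 ∧ q1 ≠ q2 := by
            by_contra hcon
            push_neg at hcon
            refine hd (le_antisymm (fun q1 q2 h => hcon q1 q2 h) bot_le)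
          obtain ⟨q1, q2, hq, hqne⟩ := hdpair
          obtain ⟨p1, rfl⟩ := AddCon.mk'_surjective (c := x) q1
          obtain ⟨p2, rfl⟩ := AddCon.mk'_surjective (c := x) q2
          have hx12 : x p1 p2 := by rw [heq]; exact hq
          exact hqne (x.eq.mpr hx12)
      haveI hfgc' : AddMonoid.FG c'.Quotient := IH c' hlt
      -- transfer to d.Quotient
      set φ : S' →+ d.Quotient := (AddCon.mk' d).comp (AddCon.mk' x) with hφdef
      have hker : c' ≤ AddCon.ker φ := by
        intro p q hpq
        rw [AddCon.ker_rel]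
        exact d.eq.mpr hpq
      have hsurj : Function.Surjective (AddCon.lift c' φ hker) := by
        intro z
        obtain ⟨y, rfl⟩ := AddCon.mk'_surjective (c := d) z
        obtain ⟨p, rfl⟩ := AddCon.mk'_surjective (c := x) y
        exact ⟨c'.mk' p, AddCon.lift_mk' hker p⟩
      exact AddMonoid.fg_of_surjective (AddCon.lift c' φ hker) hsurj
  haveI := key ⊥
  have hker : (⊥ : AddCon S') ≤ AddCon.ker (AddMonoidHom.id S') := by
    intro p q hpq
    rw [AddCon.ker_rel]
    exact congrArg _ hpq
  refine AddMonoid.fg_of_surjective (AddCon.lift ⊥ (AddMonoidHom.id S') hker) fun z => ?_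
  exact ⟨(⊥ : AddCon S').mk' z, AddCon.lift_mk' hker z⟩

end MonAlgNoeth

/-- Let `R` be a (nonzero) commutative ring and `M` a commutative monoid.  The monoid
algebra `R[M]` is noetherian if and only if `R` is noetherian and `M` is finitely
generated. -/
theorem monoidAlgebra_noetherian_iff (R : Type*) [CommRing R] [Nontrivial R]
    (M : Type*) [AddCommMonoid M] :
    IsNoetherianRing (AddMonoidAlgebra R M) ↔ IsNoetherianRing R ∧ AddMonoid.FG M := by
  constructor
  · intro h
    constructor
    · -- R is a surjective image of R[M]
      have hsurj : Function.Surjective (AddMonoidAlgebra.lift R R M 1) := by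
        intro r
        refine ⟨algebraMap R (AddMonoidAlgebra R M) r, ?_⟩
        rw [AlgHom.commutes]
        simp
      exact isNoetherianRing_of_surjective (AddMonoidAlgebra R M) R
        (AddMonoidAlgebra.lift R R M 1).toRingHom hsurj
    · exact MonAlgNoeth.main_fg R M
  · rintro ⟨hR, hM⟩
    haveI : Algebra.FiniteType R (AddMonoidAlgebra R M) := AddMonoidAlgebra.finiteType_of_fg R M
    exact Algebra.FiniteType.isNoetherianRing R (AddMonoidAlgebra R M)
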